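/- If T is a pruned tree with cat(T) = 3, then T is a path; consequently T ≅ P_n for some 5 ≤ n ≤ 8. -/

import Mathlib

open SimpleGraph

universe u

/-- The cat can move from `u` to `w` in `G`: there is a nontrivial path,
equivalently `w ≠ u` and `w` is reachable from `u`. -/
def CatMove {V : Type u} (G : SimpleGraph V) (u w : V) : Prop :=
  u ≠ w ∧ G.Reachable u w

/-- `CapturedIn G v n` : with the cat on `v` and the herder to cut next,
the herder can guarantee that the cat is isolated after at most `n` edge deletions. -/
inductive CapturedIn {V : Type u} : SimpleGraph V → V → ℕ → Prop
  | isolated {G : SimpleGraph V} {v : V} {n : ℕ} (h : ∀ w, ¬ G.Adj v w) :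
      CapturedIn G v n
  | cut {G : SimpleGraph V} {v : V} {n : ℕ} (e : Sym2 V) (he : e ∈ G.edgeSet)
      (h : ∀ w, CatMove (G.deleteEdges {e}) v w → CapturedIn (G.deleteEdges {e}) w n) :
      CapturedIn G v (n + 1)

/-- The cat number of `G` with the cat starting at `v` (the game value; `⊤` if
the herder cannot guarantee capture within any fixed number of cuts). -/
noncomputable def catVNum {V : Type u} (G : SimpleGraph V) (v : V) : ℕ∞ :=
  sInf (Nat.cast '' {m : ℕ | CapturedIn G v m})

/-- The cat number of `G`: the cat picks the best starting vertex. -/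
noncomputable def catNum {V : Type u} (G : SimpleGraph V) : ℕ∞ :=
  ⨆ v, catVNum G v

/-- The cat, starting at `v`, can evade capture forever: there is a set of safe
positions (remaining graph, cat location), closed under responding to any cut. -/
def CatWinFrom {V : Type u} (G : SimpleGraph V) (v : V) : Prop :=
  ∃ S : Set (SimpleGraph V × V), (G, v) ∈ S ∧
    ∀ p ∈ S, (∃ w, p.1.Adj p.2 w) ∧
      ∀ e ∈ p.1.edgeSet, ∃ w, CatMove (p.1.deleteEdges {e}) p.2 w ∧
        (p.1.deleteEdges {e}, w) ∈ S

/-- `G` is cat-win if the cat can evade capture forever from some starting vertex. -/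
def CatWin {V : Type u} (G : SimpleGraph V) : Prop :=
  ∃ v, CatWinFrom G v

/-- `Evades G v n` : the cat on `v` has a strategy giving a valid response to each
of the next `n` cuts. -/
inductive Evades {V : Type u} : SimpleGraph V → V → ℕ → Prop
  | zero {G : SimpleGraph V} {v : V} : Evades G v 0
  | succ {G : SimpleGraph V} {v : V} {n : ℕ} (move : Sym2 V → V)
      (hmove : ∀ e ∈ G.edgeSet, CatMove (G.deleteEdges {e}) v (move e))
      (h : ∀ e ∈ G.edgeSet, Evades (G.deleteEdges {e}) (move e) n) :
      Evades G v (n + 1)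

/-- `G` is `k`-evadible for every `k`: for each `n` the cat can respond to the
first `n` cuts from a suitable starting vertex. -/
def OmegaEvadible {V : Type u} (G : SimpleGraph V) : Prop :=
  ∀ n : ℕ, ∃ v, Evades G v n

/-- The infinite complete binary tree on binary strings. -/
def binTree : SimpleGraph (List Bool) :=
  SimpleGraph.fromRel (fun a b => ∃ t : Bool, b = a ++ [t])

/-- `H` is a minor of `G` : disjoint connected branch sets, one per vertex of `H`,
with an edge of `G` between branch sets for every edge of `H`. -/
def IsMinor {W : Type*} {V : Type u} (H : SimpleGraph W) (G : SimpleGraph V) : Prop :=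
  ∃ B : W → Set V,
    (∀ w, (G.induce (B w)).Connected) ∧
    (Pairwise fun w₁ w₂ => Disjoint (B w₁) (B w₂)) ∧
    (∀ w₁ w₂, H.Adj w₁ w₂ → ∃ x ∈ B w₁, ∃ y ∈ B w₂, G.Adj x y)

/-- Every pair of distinct vertices is joined by two edge-disjoint (finite) paths. -/
def TwoEdgeConnected {V : Type u} (G : SimpleGraph V) : Prop :=
  ∀ u v : V, u ≠ v → ∃ (p q : G.Walk u v), p.IsPath ∧ q.IsPath ∧
    ∀ e ∈ p.edges, e ∉ q.edges

/-- `x` has degree exactly 1 in `G`. -/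
def DegOne {V : Type u} (G : SimpleGraph V) (x : V) : Prop :=
  ∃ a, G.neighborSet x = {a}

/-- `x` has degree exactly 2 in `G`. -/
def DegTwo {V : Type u} (G : SimpleGraph V) (x : V) : Prop :=
  ∃ a b, a ≠ b ∧ G.neighborSet x = {a, b}

/-- `x` has degree exactly 3 in `G`. -/
def DegThree {V : Type u} (G : SimpleGraph V) (x : V) : Prop :=
  ∃ a b c, a ≠ b ∧ a ≠ c ∧ b ≠ c ∧ G.neighborSet x = {a, b, c}

/-- `x` has degree at least `k` in `G`. -/
def DegGe {V : Type u} (G : SimpleGraph V) (x : V) (k : ℕ) : Prop :=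
  ∃ s : Finset V, s.card = k ∧ ∀ a ∈ s, G.Adj x a

/-- A pruned tree: a tree with (i) no vertex of degree ≥ 3 carrying two pendant
leaves, (ii) no duplicated pendant `P₂`-paths at a common vertex, and (iii) no
pendant leaf `l` in a configuration `w v u l` with `deg w = deg l = 1`,
`deg v = 2`, `deg u = 3` and a further neighbour `t` of `u` of degree ≥ 2. -/
def PrunedTree {V : Type u} (T : SimpleGraph V) : Prop :=
  T.IsTree ∧
  (¬ ∃ x y z : V, x ≠ z ∧ T.Adj y x ∧ T.Adj y z ∧
      DegOne T x ∧ DegOne T z ∧ DegGe T y 3) ∧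
  (¬ ∃ u v₁ w₁ v₂ w₂ : V, v₁ ≠ v₂ ∧
      T.Adj u v₁ ∧ T.Adj v₁ w₁ ∧ u ≠ w₁ ∧ DegTwo T v₁ ∧ DegOne T w₁ ∧
      T.Adj u v₂ ∧ T.Adj v₂ w₂ ∧ u ≠ w₂ ∧ DegTwo T v₂ ∧ DegOne T w₂) ∧
  (¬ ∃ w v u l t : V, T.Adj w v ∧ T.Adj v u ∧ T.Adj u l ∧ T.Adj u t ∧
      w ≠ u ∧ v ≠ l ∧ w ≠ l ∧ t ≠ v ∧ t ≠ l ∧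
      DegOne T l ∧ DegOne T w ∧ DegTwo T v ∧ DegThree T u ∧ DegGe T t 2)

section CatAux

universe v

open SimpleGraph Walk

variable {V : Type u} {G T : SimpleGraph V}

theorem CapturedIn.mono {v : V} {m : ℕ} (h : CapturedIn G v m) :
    ∀ n, m ≤ n → CapturedIn G v n := by
  induction h with
  | isolated h => exact fun n _ => .isolated h
  | cut e he h ih =>
    intro n hn
    obtain ⟨n, rfl⟩ : ∃ k, n = k + 1 := ⟨n - 1, by omega⟩
    exact .cut e he fun w hw => ih w hw n (by omega)

theorem reach_mem {S : Set V} (hS : ∀ x ∈ S, ∀ y, G.Adj x y → y ∈ S) :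
    ∀ {v w : V}, G.Walk v w → v ∈ S → w ∈ S
  | _, _, Walk.nil, hv => hv
  | _, _, Walk.cons h q, hv => reach_mem hS q (hS _ hv _ h)

theorem reach_mem' {S : Set V} (hS : ∀ x ∈ S, ∀ y, G.Adj x y → y ∈ S)
    {v w : V} (h : G.Reachable v w) (hv : v ∈ S) : w ∈ S := by
  obtain ⟨q⟩ := h; exact reach_mem hS q hv

def IsArm (G : SimpleGraph V) (f : ℕ → V) (m : ℕ) : Prop :=
  (∀ i, i < m → G.Adj (f i) (f (i + 1))) ∧
    (∀ i, i ≤ m → ∀ j, j ≤ m → f i = f j → i = j)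

theorem IsArm.reachable {f : ℕ → V} {m : ℕ} (hf : IsArm G f m) :
    ∀ j, j ≤ m → G.Reachable (f 0) (f j) := by
  intro j hj
  induction j with
  | zero => exact Reachable.refl _
  | succ k ih => exact (ih (by omega)).trans (hf.1 k (by omega)).reachable

theorem IsArm.delete {f : ℕ → V} {m : ℕ} (hf : IsArm G f m) {e : Sym2 V}
    (he : ∀ i, i < m → s(f i, f (i + 1)) ≠ e) : IsArm (G.deleteEdges {e}) f m :=
  ⟨fun i hi => by
    rw [deleteEdges_adj]
    exact ⟨hf.1 i hi, by simpa using he i hi⟩, hf.2⟩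

theorem notCap0 {v w : V} (h : G.Adj v w) : ¬ CapturedIn G v 0 := by
  intro hc; cases hc with | isolated h' => exact h' w h

theorem notCap1 {v x y : V} (hx : G.Adj v x) (hy : G.Adj v y) (hxy : x ≠ y) :
    ¬ CapturedIn G v 1 := by
  intro hc
  cases hc with
  | isolated h' => exact h' x hx
  | cut e he h =>
    have hpick : ∃ w, G.Adj v w ∧ s(v, w) ≠ e := by
      by_cases hex : s(v, x) = e
      · exact ⟨y, hy, fun hey => hxy (Sym2.congr_right.mp (hex.trans hey.symm))⟩
      · exact ⟨x, hx, hex⟩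
    obtain ⟨w, hw, hwe⟩ := hpick
    have hadj : (G.deleteEdges {e}).Adj v w := by
      rw [deleteEdges_adj]; exact ⟨hw, by simpa using hwe⟩
    exact notCap0 hadj.symm (h w ⟨hadj.ne, hadj.reachable⟩)

def ArmDisj (f g : ℕ → V) (m k : ℕ) : Prop :=
  ∀ i, i ≤ m → ∀ j, j ≤ k → f i = g j → i = 0 ∧ j = 0

theorem ArmDisj.edge_ne {f g : ℕ → V} {m k : ℕ} (h : ArmDisj f g m k)
    {i j : ℕ} (hi : i < m) (hj : j < k) :
    s(f i, f (i + 1)) ≠ s(g j, g (j + 1)) := by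
  intro he
  rw [Sym2.eq_iff] at he
  rcases he with ⟨h1, h2⟩ | ⟨h1, h2⟩
  · exact absurd (h _ (by omega) _ (by omega) h2).1 (by omega)
  · exact absurd (h _ (by omega) _ (by omega) h1).2 (by omega)

theorem notCap2 {v : V} {f g : ℕ → V} (hf : IsArm G f 2) (hg : IsArm G g 2)
    (hfv : f 0 = v) (hgv : g 0 = v) (hd : ArmDisj f g 2 2) : ¬ CapturedIn G v 2 := by
  intro hc
  cases hc with
  | isolated h' => exact h' (f 1) (hfv ▸ hf.1 0 (by omega))
  | cut e he h =>
    have key : ∀ (f : ℕ → V), IsArm G f 2 → f 0 = v →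
        (∀ i, i < 2 → s(f i, f (i+1)) ≠ e) → False := by
      intro f hf hfv hfe
      have hf' : IsArm (G.deleteEdges {e}) f 2 := hf.delete hfe
      have hne : v ≠ f 1 := fun hh => by
        have := hf.2 0 (by omega) 1 (by omega) (hfv.trans hh); omega
      have hcap := h (f 1) ⟨hne, hfv ▸ hf'.reachable 1 (by omega)⟩
      exact notCap1 ((hf'.1 0 (by omega)).symm) (hf'.1 1 (by omega))
        (fun hh => by have := hf.2 0 (by omega) 2 (by omega) hh; omega) hcap
    by_cases hfe : ∀ i, i < 2 → s(f i, f (i+1)) ≠ e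
    · exact key f hf hfv hfe
    · push_neg at hfe
      obtain ⟨i, hi, hie⟩ := hfe
      exact key g hg hgv fun j hj hje => (hd.edge_ne hi hj) (hie.trans hje.symm)

theorem notCap2_center {f : ℕ → V} (hf : IsArm G f 4) : ¬ CapturedIn G (f 2) 2 := by
  have hA : IsArm G (fun i => f (2 + i)) 2 := by
    refine ⟨fun i hi => ?_, fun i hi j hj hij => ?_⟩
    · have := hf.1 (2 + i) (by omega); simpa [Nat.add_assoc] using this
    · have := hf.2 (2 + i) (by omega) (2 + j) (by omega) hij; omega
  have hB : IsArm G (fun i => f (2 - i)) 2 := by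
    refine ⟨fun i hi => ?_, fun i hi j hj hij => ?_⟩
    · have := (hf.1 (2 - (i+1)) (by omega)).symm
      have h2 : 2 - (i+1) + 1 = 2 - i := by omega
      rw [h2] at this; exact this
    · have := hf.2 (2 - i) (by omega) (2 - j) (by omega) hij; omega
  exact notCap2 hA hB rfl rfl (fun i hi j hj hij => by
    have := hf.2 (2 + i) (by omega) (2 - j) (by omega) hij; omega)

theorem notCap3_two {v : V} {f g : ℕ → V} (hf : IsArm G f 4) (hg : IsArm G g 4)
    (hfv : f 0 = v) (hgv : g 0 = v) (hd : ArmDisj f g 4 4) : ¬ CapturedIn G v 3 := by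
  intro hc
  cases hc with
  | isolated h' => exact h' (f 1) (hfv ▸ hf.1 0 (by omega))
  | cut e he h =>
    have key : ∀ (f : ℕ → V), IsArm G f 4 → f 0 = v →
        (∀ i, i < 4 → s(f i, f (i+1)) ≠ e) → False := by
      intro f hf hfv hfe
      have hf' : IsArm (G.deleteEdges {e}) f 4 := hf.delete hfe
      have hne : v ≠ f 2 := fun hh => by
        have := hf.2 0 (by omega) 2 (by omega) (hfv.trans hh); omega
      exact notCap2_center hf' (h (f 2) ⟨hne, hfv ▸ hf'.reachable 2 (by omega)⟩)
    by_cases hfe : ∀ i, i < 4 → s(f i, f (i+1)) ≠ e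
    · exact key f hf hfv hfe
    · push_neg at hfe
      obtain ⟨i, hi, hie⟩ := hfe
      exact key g hg hgv fun j hj hje => (hd.edge_ne hi hj) (hie.trans hje.symm)

theorem notCap3_three {v : V} {f g : ℕ → V} {l : V} (hf : IsArm G f 3) (hg : IsArm G g 3)
    (hfv : f 0 = v) (hgv : g 0 = v) (hl : G.Adj v l)
    (hd : ArmDisj f g 3 3)
    (hlf : ∀ i, 1 ≤ i → i ≤ 3 → f i ≠ l) (hlg : ∀ i, 1 ≤ i → i ≤ 3 → g i ≠ l) :
    ¬ CapturedIn G v 3 := by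
  intro hc
  cases hc with
  | isolated h' => exact h' (f 1) (hfv ▸ hf.1 0 (by omega))
  | cut e he h =>
    have key : ∀ (f : ℕ → V) (x : V), IsArm G f 3 → f 0 = v →
        (∀ i, i < 3 → s(f i, f (i+1)) ≠ e) →
        G.Adj v x → s(v, x) ≠ e → (∀ i, 1 ≤ i → i ≤ 3 → f i ≠ x) → False := by
      intro f x hf hfv hfe hx hxe hxf
      subst hfv
      have hf' : IsArm (G.deleteEdges {e}) f 3 := hf.delete hfe
      have hxadj : (G.deleteEdges {e}).Adj (f 0) x := by
        rw [deleteEdges_adj]; exact ⟨hx, by simpa using hxe⟩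
      have finj : ∀ i, i ≤ 3 → ∀ j, j ≤ 3 → f i = f j → i = j := hf.2
      have hA : IsArm (G.deleteEdges {e}) (fun i => f (1 + i)) 2 := by
        refine ⟨fun i hi => ?_, fun i hi j hj hij => ?_⟩
        · have := hf'.1 (1 + i) (by omega); simpa [Nat.add_assoc] using this
        · have := finj (1 + i) (by omega) (1 + j) (by omega) hij; omega
      have h01 : f 0 ≠ f 1 := fun hh => by have := finj 0 (by omega) 1 (by omega) hh; omega
      have h0x : f 0 ≠ x := hx.ne
      have h1x : f 1 ≠ x := hxf 1 (by omega) (by omega)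
      set B : ℕ → V := fun i => match i with | 0 => f 1 | 1 => f 0 | _ => x with hB
      have hBarm : IsArm (G.deleteEdges {e}) B 2 := by
        constructor
        · intro i hi
          interval_cases i
          · exact (hf'.1 0 (by omega)).symm
          · exact hxadj
        · intro i hi j hj hij
          interval_cases i <;> interval_cases j <;>
            first
              | rfl
              | (exfalso; revert hij; show _ → False;
                 first
                   | (intro hij; exact h01 hij)
                   | (intro hij; exact h01 hij.symm)
                   | (intro hij; exact h0x hij)
                   | (intro hij; exact h0x hij.symm)
                   | (intro hij; exact h1x hij)
                   | (intro hij; exact h1x hij.symm))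
      have hdAB : ArmDisj (fun i => f (1 + i)) B 2 2 := by
        intro i hi j hj hij
        interval_cases j
        · have := finj (1 + i) (by omega) 1 (by omega) hij; omega
        · have := finj (1 + i) (by omega) 0 (by omega) hij; omega
        · exact absurd hij (hxf (1 + i) (by omega) (by omega))
      exact notCap2 hA hBarm rfl rfl hdAB (h (f 1) ⟨h01, hf'.reachable 1 (by omega)⟩)
    by_cases hfe : ∀ i, i < 3 → s(f i, f (i+1)) ≠ e
    · by_cases hge : s(v, g 1) = e
      · refine key f l hf hfv hfe hl (fun hle => ?_) hlf
        exact hlg 1 (by omega) (by omega) (Sym2.congr_right.mp (hle.trans hge.symm)).symm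
      · refine key f (g 1) hf hfv hfe ?_ hge ?_
        · exact hgv ▸ hg.1 0 (by omega)
        · intro i h1 h3 hig
          have := hd i (by omega) 1 (by omega) hig; omega
    · push_neg at hfe
      obtain ⟨i, hi, hie⟩ := hfe
      have hge : ∀ j, j < 3 → s(g j, g (j+1)) ≠ e :=
        fun j hj hje => (hd.edge_ne hi hj) (hie.trans hje.symm)
      refine key g l hg hgv hge hl (fun hle => ?_) hlg
      rw [← hgv, hgv, ← hfv] at hle
      rw [← hie, Sym2.eq_iff] at hle
      rcases hle with ⟨h1, h2⟩ | ⟨h1, h2⟩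
      · exact hlf (i + 1) (by omega) (by omega) h2.symm
      · have := hf.2 0 (by omega) (i+1) (by omega) h1; omega

def isoDeleteEdges {W : Type v} {H : SimpleGraph W}
    (φ : G ≃g H) (e : Sym2 V) :
    G.deleteEdges {e} ≃g H.deleteEdges {Sym2.map φ e} :=
  { φ.toEquiv with
    map_rel_iff' := by
      intro a b
      simp only [Equiv.coe_fn_mk, deleteEdges_adj, Set.mem_singleton_iff]
      constructor
      · rintro ⟨hadj, hne⟩
        refine ⟨φ.map_adj_iff.mp hadj, fun hh => hne ?_⟩
        subst hh
        exact (Sym2.map_pair_eq φ a b).symm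
      · rintro ⟨hadj, hne⟩
        refine ⟨φ.map_adj_iff.mpr hadj, fun hh => hne ?_⟩
        rw [← Sym2.map_pair_eq] at hh
        exact Sym2.map.injective φ.injective hh }

theorem CapturedIn.of_iso {G₀ : SimpleGraph V} {v₀ : V} {n₀ : ℕ}
    (hc : CapturedIn G₀ v₀ n₀) :
    ∀ {W : Type v} {H : SimpleGraph W} (φ : G₀ ≃g H), CapturedIn H (φ v₀) n₀ := by
  induction hc with
  | @isolated G v n h =>
    intro W H φ
    refine .isolated fun w hw => ?_
    have : H.Adj (φ v) (φ (φ.symm w)) := by simpa using hw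
    exact h _ (φ.map_adj_iff.mp this)
  | @cut G v n e he h ih =>
    intro W H φ
    refine .cut (Sym2.map φ e) (Iso.map_mem_edgeSet_iff φ |>.mpr he) fun w hw => ?_
    set ψ := isoDeleteEdges φ e with hψ
    have hwv : φ.symm w ≠ v := fun hh => hw.1 (by rw [← hh]; simp)
    have hreach : (G.deleteEdges {e}).Reachable v (φ.symm w) := by
      have := hw.2.map ψ.symm.toHom
      have h1 : ψ.symm.toHom (φ v) = v := φ.toEquiv.symm_apply_apply v
      have h2 : ψ.symm.toHom w = φ.symm w := rfl
      rwa [h1, h2] at this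
    have := ih (φ.symm w) ⟨fun hh => hwv hh.symm, hreach⟩ ψ
    have h3 : ψ (φ.symm w) = w := φ.toEquiv.apply_symm_apply w
    rwa [h3] at this

theorem pathEq (ht : T.IsAcyclic) {u v : V} {p q : T.Walk u v}
    (hp : p.IsPath) (hq : q.IsPath) : p = q :=
  Subtype.ext_iff.mp (ht.path_unique ⟨p, hp⟩ ⟨q, hq⟩)

theorem no_adj2 (ht : T.IsAcyclic) {u a b : V} (h1 : T.Adj u a) (h2 : T.Adj a b)
    (hbu : b ≠ u) : ¬ T.Adj u b := by
  intro h3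
  have hp : (Walk.cons h1 (Walk.cons h2 Walk.nil)).IsPath := by
    simp [Walk.isPath_def, h1.ne, h2.ne, hbu.symm]
  have hq : (Walk.cons h3 Walk.nil).IsPath := by
    simp [Walk.isPath_def, h3.ne]
  have := congrArg Walk.length (pathEq ht hp hq)
  simp at this

theorem no_adj3 (ht : T.IsAcyclic) {u a b c : V} (h1 : T.Adj u a) (h2 : T.Adj a b)
    (h3 : T.Adj b c) (hbu : b ≠ u) (hcu : c ≠ u) (hca : c ≠ a) : ¬ T.Adj u c := by
  intro h4
  have hp : (Walk.cons h1 (Walk.cons h2 (Walk.cons h3 Walk.nil))).IsPath := by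
    simp [Walk.isPath_def, h1.ne, h2.ne, h3.ne, hbu.symm, hcu.symm, hca.symm]
  have hq : (Walk.cons h4 Walk.nil).IsPath := by
    simp [Walk.isPath_def, h4.ne]
  have := congrArg Walk.length (pathEq ht hp hq)
  simp at this

theorem eq22 (ht : T.IsAcyclic) {u a a' s : V} (h1 : T.Adj u a) (h2 : T.Adj a s)
    (h1' : T.Adj u a') (h2' : T.Adj a' s) (hsu : s ≠ u) : a = a' := by
  have hp : (Walk.cons h1 (Walk.cons h2 Walk.nil)).IsPath := by
    simp [Walk.isPath_def, h1.ne, h2.ne, hsu.symm]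
  have hq : (Walk.cons h1' (Walk.cons h2' Walk.nil)).IsPath := by
    simp [Walk.isPath_def, h1'.ne, h2'.ne, hsu.symm]
  have := congrArg Walk.support (pathEq ht hp hq)
  simp at this
  exact this

theorem no23 (ht : T.IsAcyclic) {u a s x y : V} (h1 : T.Adj u a) (h2 : T.Adj a s)
    (g1 : T.Adj u x) (g2 : T.Adj x y) (g3 : T.Adj y s)
    (hsu : s ≠ u) (hyu : y ≠ u) (hsx : s ≠ x) : False := by
  have hp : (Walk.cons h1 (Walk.cons h2 Walk.nil)).IsPath := by
    simp [Walk.isPath_def, h1.ne, h2.ne, hsu.symm]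
  have hq : (Walk.cons g1 (Walk.cons g2 (Walk.cons g3 Walk.nil))).IsPath := by
    simp [Walk.isPath_def, g1.ne, g2.ne, g3.ne, hyu.symm, hsu.symm, hsx.symm]
  have := congrArg Walk.length (pathEq ht hp hq)
  simp at this

theorem eq33 (ht : T.IsAcyclic) {u x y s x' y' : V} (h1 : T.Adj u x) (h2 : T.Adj x y)
    (h3 : T.Adj y s) (g1 : T.Adj u x') (g2 : T.Adj x' y') (g3 : T.Adj y' s)
    (hyu : y ≠ u) (hsu : s ≠ u) (hsx : s ≠ x)
    (hyu' : y' ≠ u) (hsx' : s ≠ x') : x = x' ∧ y = y' := by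
  have hp : (Walk.cons h1 (Walk.cons h2 (Walk.cons h3 Walk.nil))).IsPath := by
    simp [Walk.isPath_def, h1.ne, h2.ne, h3.ne, hyu.symm, hsu.symm, hsx.symm]
  have hq : (Walk.cons g1 (Walk.cons g2 (Walk.cons g3 Walk.nil))).IsPath := by
    simp [Walk.isPath_def, g1.ne, g2.ne, g3.ne, hyu'.symm, hsu.symm, hsx'.symm]
  have := congrArg Walk.support (pathEq ht hp hq)
  simp at this
  exact this

theorem degGe3 {u a b c : V} (ha : T.Adj u a) (hb : T.Adj u b) (hc : T.Adj u c)
    (hab : a ≠ b) (hac : a ≠ c) (hbc : b ≠ c) : DegGe T u 3 := by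
  classical
  refine ⟨{a, b, c}, ?_, ?_⟩
  · rw [Finset.card_insert_of_notMem (by simp [hab, hac]),
      Finset.card_insert_of_notMem (by simp [hbc]), Finset.card_singleton]
  · intro x hx
    simp only [Finset.mem_insert, Finset.mem_singleton] at hx
    rcases hx with rfl | rfl | rfl <;> assumption

theorem degGe2 {u a b : V} (ha : T.Adj u a) (hb : T.Adj u b) (hab : a ≠ b) :
    DegGe T u 2 := by
  classical
  refine ⟨{a, b}, ?_, ?_⟩
  · rw [Finset.card_insert_of_notMem (by simp [hab]), Finset.card_singleton]
  · intro x hx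
    simp only [Finset.mem_insert, Finset.mem_singleton] at hx
    rcases hx with rfl | rfl <;> assumption

def Arm3 (T : SimpleGraph V) (u x : V) : Prop :=
  ∃ y z, T.Adj x y ∧ T.Adj y z ∧ y ≠ u ∧ z ≠ u ∧ z ≠ x

def ClsL (T : SimpleGraph V) (u x : V) : Prop := T.neighborSet x = {u}

def ClsP (T : SimpleGraph V) (u x : V) : Prop :=
  ∃ y, T.Adj x y ∧ y ≠ u ∧ T.neighborSet y = {x} ∧ T.neighborSet x = {u, y}

theorem classify (hcy : T.IsAcyclic)
    (hI : ¬ ∃ x y z : V, x ≠ z ∧ T.Adj y x ∧ T.Adj y z ∧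
      DegOne T x ∧ DegOne T z ∧ DegGe T y 3)
    {u x : V} (hux : T.Adj u x) : Arm3 T u x ∨ ClsL T u x ∨ ClsP T u x := by
  by_cases harm : Arm3 T u x
  · exact Or.inl harm
  right
  rw [Arm3] at harm
  push_neg at harm
  by_cases hy : ∃ y, T.Adj x y ∧ y ≠ u
  · right
    obtain ⟨y, hxy, hyu⟩ := hy
    have leafy : ∀ y', T.Adj x y' → y' ≠ u → T.neighborSet y' = {x} := by
      intro y' hxy' hy'u
      ext z
      simp only [mem_neighborSet, Set.mem_singleton_iff]
      constructor
      · intro hz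
        have hzu : z ≠ u := by
          rintro rfl
          exact no_adj2 hcy hux hxy' hy'u hz.symm
        exact harm y' z hxy' hz hy'u hzu
      · rintro rfl
        exact hxy'.symm
    refine ⟨y, hxy, hyu, leafy y hxy hyu, ?_⟩
    ext z
    simp only [mem_neighborSet, Set.mem_insert_iff, Set.mem_singleton_iff]
    constructor
    · intro hz
      by_contra hcon
      push_neg at hcon
      obtain ⟨hzu, hzy⟩ := hcon
      exact hI ⟨y, x, z, fun hh => hzy hh.symm, hxy, hz, ⟨x, leafy y hxy hyu⟩,
        ⟨x, leafy z hz hzu⟩,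
        degGe3 hux.symm hxy hz (fun hh => hyu hh.symm) (fun hh => hzu hh.symm) hzy.symm⟩
    · rintro (rfl | rfl)
      · exact hux.symm
      · exact hxy
  · left
    push_neg at hy
    ext z
    simp only [mem_neighborSet, Set.mem_singleton_iff]
    exact ⟨fun hz => hy z hz, fun hz => hz ▸ hux.symm⟩

theorem arm3_of {a0 a1 a2 a3 : V} (h01 : T.Adj a0 a1) (h12 : T.Adj a1 a2)
    (h23 : T.Adj a2 a3) (d02 : a0 ≠ a2) (d03 : a0 ≠ a3) (d13 : a1 ≠ a3) :
    IsArm T (fun i => match i with | 0 => a0 | 1 => a1 | 2 => a2 | _ => a3) 3 := by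
  constructor
  · intro i hi
    interval_cases i
    · exact h01
    · exact h12
    · exact h23
  · intro i hi j hj hij
    have d01 : a0 ≠ a1 := h01.ne
    have d12 : a1 ≠ a2 := h12.ne
    have d23 : a2 ≠ a3 := h23.ne
    interval_cases i <;> interval_cases j <;>
      first
        | rfl
        | (exfalso; revert hij; show _ → False; intro hij;
           first
             | exact d01 hij | exact d01 hij.symm
             | exact d02 hij | exact d02 hij.symm
             | exact d03 hij | exact d03 hij.symm
             | exact d12 hij | exact d12 hij.symm
             | exact d13 hij | exact d13 hij.symm
             | exact d23 hij | exact d23 hij.symm)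

theorem cAA (hcy : T.IsAcyclic) {u x1 x2 x3 : V} (hcapu : CapturedIn T u 3)
    (hx1 : T.Adj u x1) (hx2 : T.Adj u x2) (h12 : x1 ≠ x2)
    (hA1 : Arm3 T u x1) (hA2 : Arm3 T u x2)
    (hx3 : T.Adj u x3) (h31 : x3 ≠ x1) (h32 : x3 ≠ x2) : False := by
  obtain ⟨y1, z1, h1y, h1z, hy1u, hz1u, hz1x1⟩ := hA1
  obtain ⟨y2, z2, h2y, h2z, hy2u, hz2u, hz2x2⟩ := hA2
  have n1 : u ≠ x2 := hx2.ne
  have n4 : x1 ≠ x2 := h12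
  have n5 : x1 ≠ y2 := by rintro rfl; exact no_adj2 hcy hx2 h2y hy2u hx1
  have n6 : x1 ≠ z2 := by rintro rfl; exact no_adj3 hcy hx2 h2y h2z hy2u hz2u hz2x2 hx1
  have n7 : y1 ≠ x2 := by rintro rfl; exact no_adj2 hcy hx1 h1y hy1u hx2
  have n8 : y1 ≠ y2 := by
    intro hh; exact n4 (eq22 hcy hx1 h1y hx2 (by rw [hh]; exact h2y) hy1u)
  have n9 : y1 ≠ z2 := by
    intro hh; exact no23 hcy hx1 h1y hx2 h2y (by rw [hh]; exact h2z) hy1u hy2u n7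
  have n10 : z1 ≠ x2 := by
    intro hh; exact no_adj3 hcy hx1 h1y h1z hy1u hz1u hz1x1 (by rw [hh]; exact hx2)
  have n11 : z1 ≠ y2 := by
    intro hh; exact no23 hcy hx2 h2y hx1 h1y (by rw [← hh]; exact h1z) hy2u hy1u
      (fun hq => n5 hq.symm)
  have n12 : z1 ≠ z2 := by
    intro hh
    exact n4 (eq33 hcy hx1 h1y h1z hx2 h2y (by rw [hh]; exact h2z)
      hy1u hz1u hz1x1 hy2u n10).1
  have hfarm : IsArm T (fun i => match i with | 0 => u | 1 => x1 | 2 => y1 | _ => z1) 3 :=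
    arm3_of hx1 h1y h1z hy1u.symm hz1u.symm hz1x1.symm
  have hgarm : IsArm T (fun i => match i with | 0 => u | 1 => x2 | 2 => y2 | _ => z2) 3 :=
    arm3_of hx2 h2y h2z hy2u.symm hz2u.symm hz2x2.symm
  have hd : ArmDisj (fun i => match i with | 0 => u | 1 => x1 | 2 => y1 | _ => z1)
      (fun i => match i with | 0 => u | 1 => x2 | 2 => y2 | _ => z2) 3 3 := by
    have m2 : u ≠ y2 := hy2u.symm
    have m3 : u ≠ z2 := hz2u.symm
    have m1' : x1 ≠ u := hx1.ne'
    have m2' : y1 ≠ u := hy1u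
    have m3' : z1 ≠ u := hz1u
    intro i hi j hj hij
    interval_cases i <;> interval_cases j <;>
      first
        | exact ⟨rfl, rfl⟩
        | (exfalso; revert hij; show _ → False; intro hij;
           first
             | exact n1 hij | exact m2 hij | exact m3 hij
             | exact m1' hij | exact m2' hij | exact m3' hij
             | exact n4 hij | exact n5 hij | exact n6 hij
             | exact n7 hij | exact n8 hij | exact n9 hij
             | exact n10 hij | exact n11 hij | exact n12 hij)
  have hlf : ∀ i, 1 ≤ i → i ≤ 3 →
      (fun i => match i with | 0 => u | 1 => x1 | 2 => y1 | _ => z1) i ≠ x3 := by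
    intro i hi1 hi3
    interval_cases i
    · exact fun hh => h31 hh.symm
    · rintro rfl; exact no_adj2 hcy hx1 h1y hy1u hx3
    · rintro rfl; exact no_adj3 hcy hx1 h1y h1z hy1u hz1u hz1x1 hx3
  have hlg : ∀ i, 1 ≤ i → i ≤ 3 →
      (fun i => match i with | 0 => u | 1 => x2 | 2 => y2 | _ => z2) i ≠ x3 := by
    intro i hi1 hi3
    interval_cases i
    · exact fun hh => h32 hh.symm
    · rintro rfl; exact no_adj2 hcy hx2 h2y hy2u hx3
    · rintro rfl; exact no_adj3 hcy hx2 h2y h2z hy2u hz2u hz2x2 hx3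
  exact notCap3_three hfarm hgarm rfl rfl hx3 hd hlf hlg hcapu

theorem cLL {u x z : V}
    (hI : ¬ ∃ x y z : V, x ≠ z ∧ T.Adj y x ∧ T.Adj y z ∧
      DegOne T x ∧ DegOne T z ∧ DegGe T y 3)
    (hx : T.Adj u x) (hz : T.Adj u z) (hxz : x ≠ z)
    (hLx : ClsL T u x) (hLz : ClsL T u z) (hge : DegGe T u 3) : False :=
  hI ⟨x, u, z, hxz, hx, hz, ⟨u, hLx⟩, ⟨u, hLz⟩, hge⟩

theorem cPP {u x1 x2 : V}
    (hII : ¬ ∃ u v₁ w₁ v₂ w₂ : V, v₁ ≠ v₂ ∧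
      T.Adj u v₁ ∧ T.Adj v₁ w₁ ∧ u ≠ w₁ ∧ DegTwo T v₁ ∧ DegOne T w₁ ∧
      T.Adj u v₂ ∧ T.Adj v₂ w₂ ∧ u ≠ w₂ ∧ DegTwo T v₂ ∧ DegOne T w₂)
    (hx1 : T.Adj u x1) (hx2 : T.Adj u x2) (h12 : x1 ≠ x2)
    (hP1 : ClsP T u x1) (hP2 : ClsP T u x2) : False := by
  obtain ⟨y1, hx1y, hy1u, hy1leaf, hx1nb⟩ := hP1
  obtain ⟨y2, hx2y, hy2u, hy2leaf, hx2nb⟩ := hP2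
  exact hII ⟨u, x1, y1, x2, y2, h12, hx1, hx1y, fun hh => hy1u hh.symm,
    ⟨u, y1, fun hh => hy1u hh.symm, hx1nb⟩, ⟨x1, hy1leaf⟩,
    hx2, hx2y, fun hh => hy2u hh.symm,
    ⟨u, y2, fun hh => hy2u hh.symm, hx2nb⟩, ⟨x2, hy2leaf⟩⟩

theorem cLPA (hcy : T.IsAcyclic)
    (hI : ¬ ∃ x y z : V, x ≠ z ∧ T.Adj y x ∧ T.Adj y z ∧
      DegOne T x ∧ DegOne T z ∧ DegGe T y 3)
    (hII : ¬ ∃ u v₁ w₁ v₂ w₂ : V, v₁ ≠ v₂ ∧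
      T.Adj u v₁ ∧ T.Adj v₁ w₁ ∧ u ≠ w₁ ∧ DegTwo T v₁ ∧ DegOne T w₁ ∧
      T.Adj u v₂ ∧ T.Adj v₂ w₂ ∧ u ≠ w₂ ∧ DegTwo T v₂ ∧ DegOne T w₂)
    (hIII : ¬ ∃ w v u l t : V, T.Adj w v ∧ T.Adj v u ∧ T.Adj u l ∧ T.Adj u t ∧
      w ≠ u ∧ v ≠ l ∧ w ≠ l ∧ t ≠ v ∧ t ≠ l ∧
      DegOne T l ∧ DegOne T w ∧ DegTwo T v ∧ DegThree T u ∧ DegGe T t 2)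
    (hcap : ∀ v, CapturedIn T v 3)
    {u l p t : V} (hl : T.Adj u l) (hpa : T.Adj u p) (hta : T.Adj u t)
    (hlp : l ≠ p) (hlt : l ≠ t) (hpt : p ≠ t)
    (hL : ClsL T u l) (hP : ClsP T u p) (hA : Arm3 T u t) : False := by
  obtain ⟨y, hpy, hyu, hyleaf, hpnb⟩ := id hP
  obtain ⟨ty, tz, htty, htyz, htyu, htzu, htzt⟩ := id hA
  have hdge3 : DegGe T u 3 := degGe3 hl hpa hta hlp hlt hpt
  have hdeg3 : DegThree T u := by
    refine ⟨l, p, t, hlp, hlt, hpt, ?_⟩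
    ext z
    simp only [mem_neighborSet, Set.mem_insert_iff, Set.mem_singleton_iff]
    constructor
    · intro hz
      by_contra hcon
      push_neg at hcon
      obtain ⟨hzl, hzp, hzt⟩ := hcon
      rcases classify hcy hI hz with hAz | hLz | hPz
      · exact cAA hcy (hcap u) hta hz (fun hh => hzt hh.symm) hA hAz hl hlt
          (fun hh => hzl hh.symm)
      · exact cLL hI hl hz (fun hh => hzl hh.symm) hL hLz hdge3
      · exact cPP hII hpa hz (fun hh => hzp hh.symm) hP hPz
    · rintro (rfl | rfl | rfl) <;> assumption
  have hyl : y ≠ l := by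
    intro hh
    exact no_adj2 hcy hpa hpy hyu (by rw [hh]; exact hl)
  exact hIII ⟨y, p, u, l, t, hpy.symm, hpa.symm, hl, hta,
    hyu, hlp.symm, hyl, hpt.symm, hlt.symm,
    ⟨u, hL⟩, ⟨p, hyleaf⟩, ⟨u, y, fun hh => hyu hh.symm, hpnb⟩, hdeg3,
    degGe2 hta.symm htty (fun hh => htyu hh.symm)⟩

theorem no_three_nbrs (hpr : PrunedTree T) (hcap : ∀ v, CapturedIn T v 3)
    {u a b c : V} (ha : T.Adj u a) (hb : T.Adj u b) (hc : T.Adj u c)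
    (hab : a ≠ b) (hac : a ≠ c) (hbc : b ≠ c) : False := by
  obtain ⟨htree, hI, hII, hIII⟩ := hpr
  have hcy : T.IsAcyclic := htree.IsAcyclic
  have hdge3 : DegGe T u 3 := degGe3 ha hb hc hab hac hbc
  rcases classify hcy hI ha with hA | hA | hA <;>
    rcases classify hcy hI hb with hB | hB | hB <;>
      rcases classify hcy hI hc with hC | hC | hC
  -- AAA AAL AAP | ALA ALL ALP | APA APL APP
  -- LAA LAL LAP | LLA LLL LLP | LPA LPL LPP
  -- PAA PAL PAP | PLA PLL PLP | PPA PPL PPP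
  all_goals first
    | exact cAA hcy (hcap u) ha hb hab hA hB hc hac.symm hbc.symm
    | exact cAA hcy (hcap u) ha hc hac hA hC hb hab.symm hbc
    | exact cAA hcy (hcap u) hb hc hbc hB hC ha hab hac
    | exact cLL hI ha hb hab hA hB hdge3
    | exact cLL hI ha hc hac hA hC hdge3
    | exact cLL hI hb hc hbc hB hC hdge3
    | exact cPP hII ha hb hab hA hB
    | exact cPP hII ha hc hac hA hC
    | exact cPP hII hb hc hbc hB hC
    | exact cLPA hcy hI hII hIII hcap ha hb hc hab hac hbc hA hB hC
    | exact cLPA hcy hI hII hIII hcap ha hc hb hac hab hbc.symm hA hC hB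
    | exact cLPA hcy hI hII hIII hcap hb ha hc hab.symm hbc hac hB hA hC
    | exact cLPA hcy hI hII hIII hcap hb hc ha hbc hab.symm hac.symm hB hC hA
    | exact cLPA hcy hI hII hIII hcap hc ha hb hac.symm hbc.symm hab hC hA hB
    | exact cLPA hcy hI hII hIII hcap hc hb ha hbc.symm hac.symm hab.symm hC hB hA

theorem support_getElem_eq {a b : V} (p : T.Walk a b) :
    ∀ (i : ℕ) (hi : i < p.support.length), p.support[i] = p.getVert i := by
  induction p with
  | nil =>
    intro i hi
    simp only [Walk.support_nil, List.length_singleton] at hi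
    interval_cases i
    simp [Walk.getVert_zero]
  | cons h q ih =>
    intro i hi
    cases i with
    | zero => simp [Walk.support_cons, Walk.getVert_zero]
    | succ n =>
      simp only [Walk.support_cons, List.getElem_cons_succ, Walk.getVert_cons_succ]
      exact ih n (by simpa [Walk.support_cons] using hi)

theorem getVertInj {a b : V} {p : T.Walk a b} (hp : p.IsPath) {i j : ℕ}
    (hi : i ≤ p.length) (hj : j ≤ p.length) (h : p.getVert i = p.getVert j) : i = j := by
  have hlen := p.length_support
  have hi' : i < p.support.length := by omega
  have hj' : j < p.support.length := by omega
  have h1 : p.support.get ⟨i, hi'⟩ = p.support.get ⟨j, hj'⟩ := by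
    simp only [List.get_eq_getElem, support_getElem_eq, h]
  have := (hp.support_nodup.get_inj_iff).mp h1
  simpa using congrArg Fin.val this

theorem getVert_mem_support' {a b : V} (p : T.Walk a b) {i : ℕ} (hi : i ≤ p.length) :
    p.getVert i ∈ p.support :=
  Walk.mem_support_iff_exists_getVert.mpr ⟨i, rfl, hi⟩

theorem interior_nbrs {a b : V} {p : T.Walk a b} (hp : p.IsPath) {c : V}
    (hc : c ∈ p.support) (hca : c ≠ a) (hcb : c ≠ b) :
    ∃ x y, x ≠ y ∧ T.Adj c x ∧ T.Adj c y ∧ x ∈ p.support ∧ y ∈ p.support := by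
  induction p with
  | nil => simp only [Walk.support_nil, List.mem_singleton] at hc; exact absurd hc hca
  | @cons u v w h q ih =>
    simp only [Walk.support_cons, List.mem_cons] at hc
    rcases hc with rfl | hc
    · exact absurd rfl hca
    by_cases hcv : c = v
    · subst hcv
      cases q with
      | nil => exact absurd rfl hcb
      | @cons v w2 b' h2 q2 =>
        have hw2 : w2 ∈ (Walk.cons h2 q2).support := by
          simp only [Walk.support_cons, List.mem_cons]
          exact Or.inr q2.start_mem_support
        refine ⟨u, w2, ?_, h.symm, h2, ?_, ?_⟩
        · have hu : u ∉ (Walk.cons h2 q2).support := (Walk.cons_isPath_iff h _).mp hp |>.2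
          intro hh
          exact hu (hh ▸ hw2)
        · exact Walk.start_mem_support _
        · rw [Walk.support_cons]; exact List.mem_cons_of_mem _ hw2
    · obtain ⟨x, y, hxy, hcx, hcy, hxs, hys⟩ :=
        ih ((Walk.cons_isPath_iff h q).mp hp).1 hc hcv hcb
      refine ⟨x, y, hxy, hcx, hcy, ?_, ?_⟩ <;>
        (rw [Walk.support_cons]; exact List.mem_cons_of_mem _ (by assumption))

theorem extend_path (hconn : T.Preconnected)
    (hdeg : ∀ u x y z : V, T.Adj u x → T.Adj u y → T.Adj u z →
      x ≠ y → x ≠ z → y ≠ z → False)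
    {a b : V} (p : T.Walk a b) (hp : p.IsPath) {x : V} (hx : x ∉ p.support) :
    ∃ (a' b' : V) (q : T.Walk a' b'), q.IsPath ∧ q.length = p.length + 1 := by
  obtain ⟨w⟩ := hconn b x
  obtain ⟨d, hd, hfst, hsnd⟩ := w.exists_boundary_dart {y | y ∈ p.support}
    (by exact p.end_mem_support) hx
  have hadj : T.Adj d.fst d.snd := d.adj
  have hfst' : d.fst ∈ p.support := hfst
  have hsnd' : d.snd ∉ p.support := hsnd
  by_cases hcb : d.fst = b
  · have hadj' : T.Adj d.snd b := by rw [← hcb]; exact hadj.symm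
    have hns : d.snd ∉ p.reverse.support := by
      rwa [Walk.support_reverse, List.mem_reverse]
    exact ⟨d.snd, a, Walk.cons hadj' p.reverse, hp.reverse.cons hns,
      by simp [Walk.length_reverse]⟩
  by_cases hca : d.fst = a
  · have hadj' : T.Adj d.snd a := by rw [← hca]; exact hadj.symm
    exact ⟨d.snd, b, Walk.cons hadj' p, hp.cons hsnd', by simp⟩
  · exfalso
    obtain ⟨x', y', hxy, hx', hy', hxs, hys⟩ := interior_nbrs hp hfst' hca hcb
    have hx'd : x' ≠ d.snd := fun hh => hsnd' (hh ▸ hxs)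
    have hy'd : y' ≠ d.snd := fun hh => hsnd' (hh ▸ hys)
    exact hdeg d.fst x' y' d.snd hx' hy' hadj hxy hx'd hy'd

theorem adj_consecutive (hcy : T.IsAcyclic)
    (hdeg : ∀ u x y z : V, T.Adj u x → T.Adj u y → T.Adj u z →
      x ≠ y → x ≠ z → y ≠ z → False)
    {a b : V} {p : T.Walk a b} (hp : p.IsPath) {i j : ℕ}
    (hi : i ≤ p.length) (hj : j ≤ p.length) (hlt : i < j)
    (hadj : T.Adj (p.getVert i) (p.getVert j)) : j = i + 1 := by
  classical
  by_contra hne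
  have hj2 : i + 2 ≤ j := by omega
  by_cases hi0 : 1 ≤ i
  · -- interior: three neighbours
    have e1 : i - 1 + 1 = i := by omega
    have h1 : T.Adj (p.getVert i) (p.getVert (i - 1)) := by
      have := p.adj_getVert_succ (i := i - 1) (by omega)
      rw [e1] at this
      exact this.symm
    have h2 : T.Adj (p.getVert i) (p.getVert (i + 1)) :=
      p.adj_getVert_succ (by omega)
    have d1 : p.getVert (i - 1) ≠ p.getVert (i + 1) := fun hh => by
      have := getVertInj hp (by omega) (by omega) hh; omega
    have d2 : p.getVert (i - 1) ≠ p.getVert j := fun hh => by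
      have := getVertInj hp (by omega) (by omega) hh; omega
    have d3 : p.getVert (i + 1) ≠ p.getVert j := fun hh => by
      have := getVertInj hp (by omega) (by omega) hh; omega
    exact hdeg (p.getVert i) _ _ _ h1 h2 hadj d1 d2 d3
  · -- i = 0 : endpoint, use uniqueness of paths
    have hi0' : i = 0 := by omega
    subst hi0'
    have hmem : p.getVert j ∈ p.support := getVert_mem_support' p hj
    have hq : (p.takeUntil (p.getVert j) hmem).IsPath := hp.takeUntil hmem
    have hadj' : T.Adj a (p.getVert j) := by rwa [p.getVert_zero] at hadj
    have hr : (Walk.cons hadj' Walk.nil).IsPath := by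
      simp [Walk.isPath_def, hadj'.ne]
    have heq := pathEq hcy hq hr
    have hlen1 : (p.takeUntil (p.getVert j) hmem).length = 1 := by
      rw [heq]; simp
    have hspec := p.take_spec hmem
    have hv1 : p.getVert 1 = p.getVert j := by
      conv_lhs => rw [← hspec]
      rw [Walk.getVert_append]
      simp [hlen1, Walk.getVert_zero]
    have := getVertInj hp (by omega) hj hv1
    omega

theorem spanning_path_iso (hcy : T.IsAcyclic)
    (hdeg : ∀ u x y z : V, T.Adj u x → T.Adj u y → T.Adj u z →
      x ≠ y → x ≠ z → y ≠ z → False)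
    {a b : V} {p : T.Walk a b} (hp : p.IsPath) (hspan : ∀ x, x ∈ p.support) :
    Nonempty (T ≃g SimpleGraph.pathGraph (p.length + 1)) := by
  set n := p.length + 1 with hn
  have hbij : Function.Bijective (fun i : Fin n => p.getVert i) := by
    constructor
    · intro i j hij
      exact Fin.ext (getVertInj hp (by omega) (by omega) hij)
    · intro x
      obtain ⟨i, hgv, hle⟩ := Walk.mem_support_iff_exists_getVert.mp (hspan x)
      exact ⟨⟨i, by omega⟩, hgv⟩
  set e := Equiv.ofBijective _ hbij with he
  have hfwd : ∀ i j : Fin n, T.Adj (e i) (e j) → (SimpleGraph.pathGraph n).Adj i j := by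
    intro i j hadj
    have hij : (i : ℕ) ≠ (j : ℕ) := by
      intro hh
      exact hadj.ne (congrArg (fun k : ℕ => p.getVert k) hh)
    rw [SimpleGraph.pathGraph_adj]
    rcases Nat.lt_or_ge (i : ℕ) (j : ℕ) with hlt | hge
    · left
      have := adj_consecutive hcy hdeg hp (by omega) (by omega) hlt hadj
      omega
    · right
      have hlt : (j : ℕ) < (i : ℕ) := by omega
      have := adj_consecutive hcy hdeg hp (by omega) (by omega) hlt hadj.symm
      omega
  have hbwd : ∀ i j : Fin n, (SimpleGraph.pathGraph n).Adj i j → T.Adj (e i) (e j) := by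
    intro i j hadj
    rw [SimpleGraph.pathGraph_adj] at hadj
    show T.Adj (p.getVert i) (p.getVert j)
    rcases hadj with hh | hh
    · have := p.adj_getVert_succ (i := (i : ℕ)) (by omega)
      rwa [hh] at this
    · have := p.adj_getVert_succ (i := (j : ℕ)) (by omega)
      rw [hh] at this
      exact this.symm
  exact ⟨(⟨e, fun {i j} => ⟨hfwd i j, hbwd i j⟩⟩ : SimpleGraph.pathGraph n ≃g T).symm⟩


theorem notCap3_of_len8 {a b : V} {p : T.Walk a b} (hp : p.IsPath) (hlen : p.length = 8) :
    ¬ CapturedIn T (p.getVert 4) 3 := by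
  have hf : IsArm T (fun i => p.getVert (4 + i)) 4 := by
    refine ⟨fun i hi => ?_, fun i hi j hj hij => ?_⟩
    · have := p.adj_getVert_succ (i := 4 + i) (by omega)
      simpa [Nat.add_assoc] using this
    · have := getVertInj hp (i := 4 + i) (j := 4 + j) (by omega) (by omega) hij
      omega
  have hg : IsArm T (fun i => p.getVert (4 - i)) 4 := by
    refine ⟨fun i hi => ?_, fun i hi j hj hij => ?_⟩
    · have := (p.adj_getVert_succ (i := 4 - (i + 1)) (by omega)).symm
      have h2 : 4 - (i + 1) + 1 = 4 - i := by omega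
      rw [h2] at this
      exact this
    · have := getVertInj hp (i := 4 - i) (j := 4 - j) (by omega) (by omega) hij
      omega
  refine notCap3_two hf hg rfl rfl ?_
  intro i hi j hj hij
  have := getVertInj hp (i := 4 + i) (j := 4 - j) (by omega) (by omega) hij
  omega

theorem pathCap1 (v : Fin 1) : CapturedIn (pathGraph 1) v 2 := by
  refine .isolated fun w hw => ?_
  rw [pathGraph_adj] at hw
  omega

theorem pathCap2 (v : Fin 2) : CapturedIn (pathGraph 2) v 2 := by
  refine .cut s(0, 1) ?_ fun w hw => ?_
  · rw [SimpleGraph.mem_edgeSet, pathGraph_adj]; left; rfl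
  · exfalso
    have hmem : w ∈ ({v} : Set (Fin 2)) := by
      refine reach_mem' ?_ hw.2 rfl
      intro x hx y hady
      exfalso
      rw [deleteEdges_adj, pathGraph_adj] at hady
      obtain ⟨h1, h2⟩ := hady
      apply h2
      simp only [Set.mem_singleton_iff]
      fin_cases x <;> fin_cases y <;> simp_all <;> rfl
    exact hw.1 (by simpa using hmem.symm)

theorem no_catMove {G : SimpleGraph V} {v : V} (h : ∀ y, ¬ G.Adj v y)
    {w : V} (hw : CatMove G v w) : False := by
  obtain ⟨hne, ⟨q⟩⟩ := hw
  cases q with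
  | nil => exact hne rfl
  | cons h' q => exact h _ h'

theorem pathCap3 (v : Fin 3) : CapturedIn (pathGraph 3) v 2 := by
  fin_cases v
  · -- v = 0, cut s(0,1), isolates 0
    refine .cut s(0, 1) (by rw [SimpleGraph.mem_edgeSet, pathGraph_adj]; left; rfl) fun w hw => ?_
    exact absurd hw (fun hw => no_catMove (fun y hady => by
      rw [deleteEdges_adj, pathGraph_adj, Set.mem_singleton_iff] at hady
      obtain ⟨h1, h2⟩ := hady
      fin_cases y <;> simp_all <;> omega) hw)
  · -- v = 1, cut s(0,1); cat must go to 2; then cut s(1,2)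
    refine .cut s(0, 1) (by rw [SimpleGraph.mem_edgeSet, pathGraph_adj]; left; rfl) fun w hw => ?_
    have hmem : w ∈ ({1, 2} : Set (Fin 3)) := by
      refine reach_mem' ?_ hw.2 (by simp)
      intro x hx y hady
      rw [deleteEdges_adj, pathGraph_adj, Set.mem_singleton_iff] at hady
      obtain ⟨h1, h2⟩ := hady
      simp only [Set.mem_insert_iff, Set.mem_singleton_iff] at hx ⊢
      rcases hx with rfl | rfl <;> fin_cases y <;> simp_all <;> omega
    have hw2 : w = 2 := by
      simp only [Set.mem_insert_iff, Set.mem_singleton_iff] at hmem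
      rcases hmem with rfl | rfl
      · exact absurd rfl hw.1
      · rfl
    subst hw2
    refine .cut s(1, 2) ?_ fun w' hw' => ?_
    · rw [SimpleGraph.mem_edgeSet, deleteEdges_adj, pathGraph_adj, Set.mem_singleton_iff]
      constructor
      · left; rfl
      · decide
    exact absurd hw' (fun hw' => no_catMove (fun y hady => by
      rw [deleteEdges_adj, deleteEdges_adj, pathGraph_adj] at hady
      obtain ⟨⟨h1, h2⟩, h3⟩ := hady
      simp only [Set.mem_singleton_iff] at h2 h3
      fin_cases y <;> simp_all <;> omega) hw')
  · -- v = 2, cut s(1,2), isolates 2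
    refine .cut s(1, 2) (by rw [SimpleGraph.mem_edgeSet, pathGraph_adj]; left; rfl) fun w hw => ?_
    exact absurd hw (fun hw => no_catMove (fun y hady => by
      rw [deleteEdges_adj, pathGraph_adj, Set.mem_singleton_iff] at hady
      obtain ⟨h1, h2⟩ := hady
      fin_cases y <;> simp_all <;> omega) hw)

theorem pathCap4 (v : Fin 4) : CapturedIn (pathGraph 4) v 2 := by
  have hcut1 : s(1, 2) ∈ (pathGraph 4).edgeSet := by
    rw [SimpleGraph.mem_edgeSet, pathGraph_adj]; left; rfl
  have hlow : ∀ x : Fin 4, x = 0 ∨ x = 1 →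
      CapturedIn (pathGraph 4) x 2 := by
    intro x hx
    refine .cut s(1, 2) hcut1 fun w hw => ?_
    have hmem : w ∈ ({0, 1} : Set (Fin 4)) := by
      refine reach_mem' ?_ hw.2 (by rcases hx with rfl | rfl <;> simp)
      intro z hz y hady
      rw [deleteEdges_adj, pathGraph_adj, Set.mem_singleton_iff] at hady
      obtain ⟨h1, h2⟩ := hady
      simp only [Set.mem_insert_iff, Set.mem_singleton_iff] at hz ⊢
      rcases hz with rfl | rfl <;> fin_cases y <;> simp_all <;> omega
    refine .cut s(0, 1) ?_ fun w' hw' => ?_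
    · rw [SimpleGraph.mem_edgeSet, deleteEdges_adj, pathGraph_adj, Set.mem_singleton_iff]
      exact ⟨Or.inl rfl, by decide⟩
    refine absurd hw' (fun hw' => no_catMove (fun y hady => ?_) hw')
    rw [deleteEdges_adj, deleteEdges_adj, pathGraph_adj] at hady
    obtain ⟨⟨h1, h2⟩, h3⟩ := hady
    simp only [Set.mem_singleton_iff] at h2 h3
    simp only [Set.mem_insert_iff, Set.mem_singleton_iff] at hmem
    rcases hmem with rfl | rfl <;> fin_cases y <;> simp_all <;> omega
  have hhigh : ∀ x : Fin 4, x = 2 ∨ x = 3 →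
      CapturedIn (pathGraph 4) x 2 := by
    intro x hx
    refine .cut s(1, 2) hcut1 fun w hw => ?_
    have hmem : w ∈ ({2, 3} : Set (Fin 4)) := by
      refine reach_mem' ?_ hw.2 (by rcases hx with rfl | rfl <;> simp)
      intro z hz y hady
      rw [deleteEdges_adj, pathGraph_adj, Set.mem_singleton_iff] at hady
      obtain ⟨h1, h2⟩ := hady
      simp only [Set.mem_insert_iff, Set.mem_singleton_iff] at hz ⊢
      rcases hz with rfl | rfl <;> fin_cases y <;> simp_all <;> omega
    refine .cut s(2, 3) ?_ fun w' hw' => ?_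
    · rw [SimpleGraph.mem_edgeSet, deleteEdges_adj, pathGraph_adj, Set.mem_singleton_iff]
      exact ⟨Or.inl rfl, by decide⟩
    refine absurd hw' (fun hw' => no_catMove (fun y hady => ?_) hw')
    rw [deleteEdges_adj, deleteEdges_adj, pathGraph_adj] at hady
    obtain ⟨⟨h1, h2⟩, h3⟩ := hady
    simp only [Set.mem_singleton_iff] at h2 h3
    simp only [Set.mem_insert_iff, Set.mem_singleton_iff] at hmem
    rcases hmem with rfl | rfl <;> fin_cases y <;> simp_all <;> omega
  fin_cases v
  · exact hlow 0 (Or.inl rfl)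
  · exact hlow 1 (Or.inr rfl)
  · exact hhigh 2 (Or.inl rfl)
  · exact hhigh 3 (Or.inr rfl)

theorem pathCapSmall {n : ℕ} (hn : n ≤ 4) (v : Fin n) :
    CapturedIn (SimpleGraph.pathGraph n) v 2 := by
  interval_cases n
  · exact v.elim0
  · exact pathCap1 v
  · exact pathCap2 v
  · exact pathCap3 v
  · exact pathCap4 v

end CatAux

/-- a pruned tree with cat number 3 is a path `P_n`, `5 ≤ n ≤ 8`. -/
theorem prunedTree_catNum_three {V : Type u} (T : SimpleGraph V)
    (hp : PrunedTree T) (h3 : catNum T = 3) :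
    ∃ n : ℕ, 5 ≤ n ∧ n ≤ 8 ∧ Nonempty (T ≃g SimpleGraph.pathGraph n) := by
  classical
  obtain ⟨htree, hI, hII, hIII⟩ := id hp
  have hcy : T.IsAcyclic := htree.IsAcyclic
  have hconn : T.Connected := htree.isConnected
  have hNE : Nonempty V := hconn.nonempty
  have hcap3 : ∀ v, CapturedIn T v 3 := by
    intro v
    have h1 : catVNum T v ≤ 3 := by
      rw [← h3]
      exact le_iSup (fun v => catVNum T v) v
    by_contra hc
    have h4 : ((4 : ℕ) : ℕ∞) ≤ catVNum T v := by
      apply le_sInf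
      rintro x ⟨m, hm, rfl⟩
      have hm' : CapturedIn T v m := hm
      have hm3 : ¬ m ≤ 3 := fun hle => hc (hm'.mono 3 hle)
      exact_mod_cast by omega
    have hcontra := h4.trans h1
    norm_num at hcontra
  have hev2 : ∃ v, ¬ CapturedIn T v 2 := by
    by_contra hc
    push_neg at hc
    have h2 : catNum T ≤ ((2 : ℕ) : ℕ∞) := by
      apply iSup_le
      intro v
      exact sInf_le ⟨2, hc v, rfl⟩
    rw [h3] at h2
    norm_num at h2
  have hdeg : ∀ u x y z : V, T.Adj u x → T.Adj u y → T.Adj u z →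
      x ≠ y → x ≠ z → y ≠ z → False :=
    fun u x y z h1 h2 h3' d1 d2 d3 => no_three_nbrs hp hcap3 h1 h2 h3' d1 d2 d3
  have iter : ∀ ℓ : ℕ, (∃ (a b : V) (p : T.Walk a b), p.IsPath ∧ p.length = ℓ) ∨
      (∃ (a b : V) (p : T.Walk a b), p.IsPath ∧ (∀ x, x ∈ p.support) ∧ p.length ≤ ℓ) := by
    intro ℓ
    induction ℓ with
    | zero =>
      obtain ⟨v⟩ := hNE
      exact Or.inl ⟨v, v, Walk.nil, Walk.IsPath.nil, rfl⟩
    | succ k ih =>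
      rcases ih with ⟨a, b, p, hp', hlen⟩ | ⟨a, b, p, hp', hspan, hle⟩
      · by_cases hs : ∀ x, x ∈ p.support
        · exact Or.inr ⟨a, b, p, hp', hs, by omega⟩
        · push_neg at hs
          obtain ⟨x, hx⟩ := hs
          obtain ⟨a', b', q, hq, hql⟩ := extend_path hconn.preconnected hdeg p hp' hx
          exact Or.inl ⟨a', b', q, hq, by omega⟩
      · exact Or.inr ⟨a, b, p, hp', hspan, by omega⟩
  rcases iter 8 with ⟨a, b, p, hp', hlen⟩ | ⟨a, b, p, hp', hspan, hle⟩
  · exact absurd (hcap3 _) (notCap3_of_len8 hp' hlen)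
  · have hlen8 : p.length ≠ 8 := fun hh => (notCap3_of_len8 hp' hh) (hcap3 _)
    obtain ⟨φ⟩ := spanning_path_iso hcy hdeg hp' hspan
    have hge5 : 5 ≤ p.length + 1 := by
      by_contra hlt
      push_neg at hlt
      obtain ⟨v, hv⟩ := hev2
      apply hv
      have hcapped : CapturedIn (SimpleGraph.pathGraph (p.length + 1)) (φ v) 2 :=
        pathCapSmall (by omega) (φ v)
      have htrans := hcapped.of_iso φ.symm
      simpa using htrans
    exact ⟨p.length + 1, hge5, by omega, ⟨φ⟩⟩
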